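/- Let m ≥ 1, let μ and ν be probability measures on ℝ^m, let W > 0 and ε > 0. Suppose there exists a coupling γ of μ and ν such that ‖x − y‖₁ ≤ W for γ-almost every (x, y) ∈ ℝ^m × ℝ^m (i.e., the ∞-Wasserstein distance between μ and ν with respect to the L¹ norm is at most W). Then for every measurable set S ⊆ ℝ^m, (μ ∗ Lapₘ(W/ε))(S) ≤ e^ε · (ν ∗ Lapₘ(W/ε))(S); that is, the max-divergence between μ ∗ Lapₘ(W/ε) and ν ∗ Lapₘ(W/ε) is at most ε. -/

import Mathlib

open MeasureTheory ProbabilityTheory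

/-- The Laplace measure on `ℝ^m` with scale `b`: `m` i.i.d. Laplace(`b`) coordinates. -/
noncomputable def lapPi (m : ℕ) (b : ℝ) : Measure (Fin m → ℝ) :=
  MeasureTheory.volume.withDensity
    (fun x => ENNReal.ofReal (∏ k, (1 / (2 * b)) * Real.exp (-|x k| / b)))

/-- Convolution of two measures on `ℝ^m`: the law of `X + Z` with `X ∼ μ`, `Z ∼ ν` independent. -/
noncomputable def mconv {m : ℕ} (μ ν : Measure (Fin m → ℝ)) : Measure (Fin m → ℝ) :=
  (μ.prod ν).map (fun p => p.1 + p.2)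

/-- The `L¹` norm on `ℝ^m`. -/
def l1norm {m : ℕ} (x : Fin m → ℝ) : ℝ := ∑ k, |x k|

/-- `γ` is a coupling of `μ` and `ν`. -/
def IsCoupling {m : ℕ} (γ : Measure ((Fin m → ℝ) × (Fin m → ℝ)))
    (μ ν : Measure (Fin m → ℝ)) : Prop :=
  γ.map Prod.fst = μ ∧ γ.map Prod.snd = ν

/-- **Lemma A.5** (Laplace noise bounds max-divergence via `∞`-Wasserstein distance):
if `μ` and `ν` admit a coupling `γ` with `‖x − y‖₁ ≤ W` `γ`-a.e., then
`D_∞(μ ∗ Lapₘ(W/ε) ‖ ν ∗ Lapₘ(W/ε)) ≤ ε`. -/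
theorem laplace_noise_maxdiv_of_wasserstein
    (m : ℕ) (hm : 1 ≤ m)
    (μ ν : Measure (Fin m → ℝ))
    (hμ : IsProbabilityMeasure μ) (hν : IsProbabilityMeasure ν)
    (ε W : ℝ) (hε : 0 < ε) (hW : 0 < W)
    (hwass : ∃ γ : Measure ((Fin m → ℝ) × (Fin m → ℝ)),
      IsCoupling γ μ ν ∧ ∀ᵐ xy ∂γ, l1norm (xy.1 - xy.2) ≤ W) :
    ∀ S : Set (Fin m → ℝ), MeasurableSet S →
      mconv μ (lapPi m (W / ε)) S
        ≤ ENNReal.ofReal (Real.exp ε) * mconv ν (lapPi m (W / ε)) S := by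

  classical
  obtain ⟨γ, ⟨hγ1, hγ2⟩, hae⟩ := hwass
  intro S hS
  set b := W / ε with hbdef
  have hb : 0 < b := div_pos hW hε
  have hWb : W / b = ε := by
    rw [hbdef]; field_simp
  set D : (Fin m → ℝ) → ENNReal :=
    fun v => ENNReal.ofReal (∏ k, (1 / (2 * b)) * Real.exp (-|v k| / b)) with hDdef
  have hDmeas : Measurable D := by
    apply Measurable.ennreal_ofReal
    apply Finset.measurable_prod
    intro k _
    exact measurable_const.mul
      (Real.measurable_exp.comp (show Measurable fun a : Fin m → ℝ => -|a k| / b by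
        fun_prop))
  -- pointwise key inequality
  have key : ∀ x y : Fin m → ℝ, l1norm (x - y) ≤ W → ∀ u : Fin m → ℝ,
      D (u - x) ≤ ENNReal.ofReal (Real.exp ε) * D (u - y) := by
    intro x y hxy u
    rw [hDdef]
    simp only [Pi.sub_apply]
    rw [← ENNReal.ofReal_mul (Real.exp_pos ε).le]
    apply ENNReal.ofReal_le_ofReal
    have hsum : ∑ k, |x k - y k| ≤ W := by
      have : l1norm (x - y) = ∑ k, |x k - y k| := by
        simp [l1norm]
      linarith [hxy, this ▸ hxy]
    calc ∏ k, (1 / (2 * b)) * Real.exp (-|u k - x k| / b)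
        ≤ ∏ k, Real.exp (|x k - y k| / b) *
            ((1 / (2 * b)) * Real.exp (-|u k - y k| / b)) := by
          apply Finset.prod_le_prod (fun k _ => by positivity)
          intro k _
          rw [mul_comm (Real.exp (|x k - y k| / b)), mul_assoc, ← Real.exp_add]
          apply mul_le_mul_of_nonneg_left _ (by positivity)
          apply Real.exp_le_exp.mpr
          rw [← add_div]
          gcongr
          linarith [abs_sub_le (u k) (x k) (y k)]
      _ = Real.exp (∑ k, |x k - y k| / b) *
            ∏ k, (1 / (2 * b)) * Real.exp (-|u k - y k| / b) := by
          rw [Finset.prod_mul_distrib, Real.exp_sum]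
      _ ≤ Real.exp ε * ∏ k, (1 / (2 * b)) * Real.exp (-|u k - y k| / b) := by
          apply mul_le_mul_of_nonneg_right _ (Finset.prod_nonneg fun k _ => by positivity)
          apply Real.exp_le_exp.mpr
          rw [← Finset.sum_div, ← hWb]
          gcongr
  -- the shifted-mass function
  set g : (Fin m → ℝ) → ENNReal :=
    fun x => ∫⁻ u, S.indicator (fun u => D (u - x)) u ∂volume with hgdef
  have hgm : Measurable g := by
    have hH : Measurable (fun p : (Fin m → ℝ) × (Fin m → ℝ) =>
        S.indicator (fun u => D (u - p.1)) p.2) := by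
      have heq : (fun p : (Fin m → ℝ) × (Fin m → ℝ) =>
          S.indicator (fun u => D (u - p.1)) p.2)
          = fun p => if p.2 ∈ S then D (p.2 - p.1) else 0 := by
        funext p; simp [Set.indicator_apply]
      rw [heq]
      exact Measurable.ite (measurable_snd hS)
        (hDmeas.comp (measurable_snd.sub measurable_fst)) measurable_const
    exact hH.lintegral_prod_right'
  -- representation of the convolution
  have hrep : ∀ (ρ : Measure (Fin m → ℝ)), IsProbabilityMeasure ρ →
      mconv ρ (lapPi m b) S = ∫⁻ x, g x ∂ρ := by
    intro ρ hρ
    haveI := hρ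
    haveI : SFinite (lapPi m b) := by unfold lapPi; infer_instance
    rw [mconv, Measure.map_apply (show Measurable fun p : (Fin m → ℝ) × (Fin m → ℝ) => p.1 + p.2
        from measurable_fst.add measurable_snd) hS,
      Measure.prod_apply (hS.preimage (show Measurable fun p : (Fin m → ℝ) × (Fin m → ℝ) =>
        p.1 + p.2 from measurable_fst.add measurable_snd))]
    apply lintegral_congr
    intro x
    have hpre : MeasurableSet ((fun z => x + z) ⁻¹' S) :=
      hS.preimage (measurable_const_add x)
    have hset : (Prod.mk x ⁻¹' ((fun p : (Fin m → ℝ) × (Fin m → ℝ) => p.1 + p.2) ⁻¹' S))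
        = (fun z => x + z) ⁻¹' S := rfl
    rw [hset]
    calc lapPi m b ((fun z => x + z) ⁻¹' S)
        = ∫⁻ z in (fun z => x + z) ⁻¹' S, D z ∂volume := by
          rw [lapPi, withDensity_apply _ hpre]
      _ = ∫⁻ z, ((fun z => x + z) ⁻¹' S).indicator D z ∂volume := by
          rw [lintegral_indicator hpre]
      _ = ∫⁻ z, (fun u => S.indicator (fun u => D (u - x)) u) (x + z) ∂volume := by
          apply lintegral_congr
          intro z
          by_cases hz : x + z ∈ S <;>
            simp [Set.indicator_apply, Set.mem_preimage, hz, add_sub_cancel_left]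
      _ = ∫⁻ u, S.indicator (fun u => D (u - x)) u ∂volume :=
          lintegral_add_left_eq_self _ x
  -- key inequality at the level of g
  have hkey_g : ∀ x y : Fin m → ℝ, l1norm (x - y) ≤ W →
      g x ≤ ENNReal.ofReal (Real.exp ε) * g y := by
    intro x y h
    rw [hgdef]
    rw [← lintegral_const_mul' _ _ ENNReal.ofReal_ne_top]
    apply lintegral_mono
    intro u
    by_cases hu : u ∈ S
    · simp only [Set.indicator_of_mem hu]
      exact key x y h u
    · simp [Set.indicator_of_notMem hu]
  calc mconv μ (lapPi m b) S = ∫⁻ x, g x ∂μ := hrep μ hμ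
    _ = ∫⁻ p, g p.1 ∂γ := by rw [← hγ1, lintegral_map hgm measurable_fst]
    _ ≤ ∫⁻ p, ENNReal.ofReal (Real.exp ε) * g p.2 ∂γ :=
        lintegral_mono_ae (hae.mono fun p hp => hkey_g p.1 p.2 hp)
    _ = ENNReal.ofReal (Real.exp ε) * ∫⁻ p, g p.2 ∂γ :=
        lintegral_const_mul' _ _ ENNReal.ofReal_ne_top
    _ = ENNReal.ofReal (Real.exp ε) * mconv ν (lapPi m b) S := by
        rw [hrep ν hν, ← hγ2, lintegral_map hgm measurable_snd]
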